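/- Consider a dual-criticality sporadic task with parameters (T, D, D^L, C^L, C^H), let R be a release set for it, and let 0 ≤ t1 ≤ t2 be reals such that the task is in case 2, i.e., D − D^L < MOD(t2 − t1, T) < D and ⌊(t2 − t1)/T⌋·T + D ≤ t2. Then C^H · |{x ∈ R : x + D ≤ t2 and x + D^L > t1}| + C^L · |{x ∈ R : x + D ≤ t2 and x + D^L ≤ t1}| ≤ dbf^L(t1,t2) + dbf^H(t2 − t1) + C^H. (Each job with real deadline at most t2 is counted at its high-criticality WCET if its tightened deadline exceeds the switch instant t1, so that it may execute after the switch, and at its low-criticality WCET otherwise; this is the demand bound of Lemma 4 of the paper.) -/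

import Mathlib

open scoped Classical
open Finset

namespace MC

/-- `MOD t T = t - ⌊t/T⌋·T`. -/
noncomputable def MOD (t T : ℝ) : ℝ := t - (⌊t / T⌋ : ℝ) * T

/-- A dual-criticality sporadic task: minimum separation `T > 0`, low-criticality WCET
`CL` and high-criticality WCET `CH` with `0 < CL ≤ CH`, real deadline `D` and tightened
deadline `DL` with `CL ≤ DL ≤ D ≤ T`. -/
structure Task where
  T : ℝ
  D : ℝ
  DL : ℝ
  CL : ℝ
  CH : ℝ
  hT : 0 < T
  hCL : 0 < CL
  hCLCH : CL ≤ CH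
  hCLDL : CL ≤ DL
  hDLD : DL ≤ D
  hDT : D ≤ T

/-- Low-criticality demand bound function `dbf^L(t)`. -/
noncomputable def dbfL (τ : Task) (t : ℝ) : ℝ :=
  max 0 (((⌊(t - τ.DL) / τ.T⌋ : ℝ) + 1) * τ.CL)

/-- High-criticality demand bound function `dbf^H(t)`. -/
noncomputable def dbfH (τ : Task) (t : ℝ) : ℝ :=
  max 0 (((⌊(t - τ.D) / τ.T⌋ : ℝ) + 1) * τ.CH)

/-- Two-parameter low-criticality demand bound `dbf^L(t1, t2)`. -/
noncomputable def dbfL2 (τ : Task) (t1 t2 : ℝ) : ℝ :=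
  max 0 ((⌊(t2 - τ.D) / τ.T⌋ : ℝ) - (⌊(t2 - t1 - τ.D) / τ.T⌋ : ℝ) - 1) * τ.CL

/-- Unnecessary-job demand bound `dbf^{UN}(t1, t2)`. -/
noncomputable def dbfUN (τ : Task) (t1 t2 : ℝ) : ℝ :=
  if MOD t1 τ.T < τ.DL ∧ (⌊t1 / τ.T⌋ : ℝ) * τ.T + τ.DL ≤ t2 then
    min τ.CL (MOD t1 τ.T)
  else 0

/-- Maximum carry-over execution `CO(t)` pending at the start of an interval of length `t`. -/
noncomputable def CO (τ : Task) (t : ℝ) : ℝ :=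
  min τ.CL (MOD t τ.T - (τ.D - τ.DL))

/-- A release set for a task: a finite set of nonnegative reals, any two distinct
elements of which differ by at least the minimum separation `T`. -/
def ReleaseSet (τ : Task) (R : Finset ℝ) : Prop :=
  (∀ x ∈ R, 0 ≤ x) ∧ ∀ x ∈ R, ∀ y ∈ R, x ≠ y → τ.T ≤ |x - y|

/-- Case 1: `t2 - t1 ≤ D - D^L`; no job of the task executes after the switch. -/
def case1 (τ : Task) (t1 t2 : ℝ) : Prop := t2 - t1 ≤ τ.D - τ.DL

/-- Case 2: the carry-over job contributes demand after the switch. -/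
def case2 (τ : Task) (t1 t2 : ℝ) : Prop :=
  τ.D - τ.DL < MOD (t2 - t1) τ.T ∧ MOD (t2 - t1) τ.T < τ.D ∧
    (⌊(t2 - t1) / τ.T⌋ : ℝ) * τ.T + τ.D ≤ t2

/-- Case 3: neither case 1 nor case 2. -/
def case3 (τ : Task) (t1 t2 : ℝ) : Prop := ¬ case1 τ t1 t2 ∧ ¬ case2 τ t1 t2

/-- Set `S(t)` of HC tasks whose carry-over job contributes demand in an interval of
length `t` (existing test). -/
noncomputable def Sset {n : ℕ} (τ : Fin n → Task) (hc : Fin n → Bool) (t : ℝ) :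
    Finset (Fin n) :=
  univ.filter fun i =>
    hc i = true ∧ (τ i).D - (τ i).DL < MOD t (τ i).T ∧ MOD t (τ i).T < (τ i).D

/-- The existing-test bound `E(t)` (Proposition 3, from Ekberg and Yi). -/
noncomputable def Etest {n : ℕ} (τ : Fin n → Task) (hc : Fin n → Bool) (t : ℝ) : ℝ :=
  ∑ i ∈ univ.filter (fun i => hc i = true), dbfH (τ i) t +
    ∑ i ∈ Sset τ hc t, (((τ i).CH - (τ i).CL) + CO (τ i) t)

/-- `U`: the set of LC tasks together with HC tasks in case 1. -/
noncomputable def Uset {n : ℕ} (τ : Fin n → Task) (hc : Fin n → Bool) (t1 t2 : ℝ) :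
    Finset (Fin n) :=
  univ.filter fun i => hc i = false ∨ case1 (τ i) t1 t2

/-- HC tasks in case 2. -/
noncomputable def H2set {n : ℕ} (τ : Fin n → Task) (hc : Fin n → Bool) (t1 t2 : ℝ) :
    Finset (Fin n) :=
  univ.filter fun i => hc i = true ∧ case2 (τ i) t1 t2

/-- HC tasks in case 3. -/
noncomputable def H3set {n : ℕ} (τ : Fin n → Task) (hc : Fin n → Bool) (t1 t2 : ℝ) :
    Finset (Fin n) :=
  univ.filter fun i => hc i = true ∧ case3 (τ i) t1 t2

/-- The new-test bound `N(t1,t2)` of Theorem 1. -/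
noncomputable def Ntest {n : ℕ} (τ : Fin n → Task) (hc : Fin n → Bool) (t1 t2 : ℝ) : ℝ :=
  ∑ i ∈ Uset τ hc t1 t2, (dbfL (τ i) t1 + dbfUN (τ i) t1 t2) +
    ∑ i ∈ H2set τ hc t1 t2, (dbfL2 (τ i) t1 t2 + dbfH (τ i) (t2 - t1) + (τ i).CH) +
    ∑ i ∈ H3set τ hc t1 t2, (dbfL2 (τ i) t1 t2 + dbfH (τ i) (t2 - t1) + (τ i).CL)

/-- Collective bound `dbf_{UN}(t1,t2)` on the demand of all unnecessary jobs (Lemma 5). -/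
noncomputable def dbfUNtot {n : ℕ} (τ : Fin n → Task) (hc : Fin n → Bool) (t1 t2 : ℝ) : ℝ :=
  if h : (Uset τ hc t1 t2).Nonempty then
    min ((Uset τ hc t1 t2).sup' h fun i => (τ i).DL)
      (∑ i ∈ Uset τ hc t1 t2, dbfUN (τ i) t1 t2)
  else 0

/-- `dbf_{L1}(t1,t2)` (Lemma 7). -/
noncomputable def dbfL1tot {n : ℕ} (τ : Fin n → Task) (hc : Fin n → Bool) (t1 t2 : ℝ) : ℝ :=
  dbfUNtot τ hc t1 t2 + ∑ i ∈ Uset τ hc t1 t2, dbfL (τ i) t1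

/-- `dbf_{L2}(t1,t2)` (Lemma 8). -/
noncomputable def dbfL2tot {n : ℕ} (τ : Fin n → Task) (hc : Fin n → Bool) (t1 t2 : ℝ) : ℝ :=
  ∑ i ∈ H2set τ hc t1 t2, (dbfL2 (τ i) t1 t2 + (τ i).CL - CO (τ i) (t2 - t1))

/-- `dbf_{L3}(t1,t2)` (Lemma 9). -/
noncomputable def dbfL3tot {n : ℕ} (τ : Fin n → Task) (hc : Fin n → Bool) (t1 t2 : ℝ) : ℝ :=
  ∑ i ∈ H3set τ hc t1 t2, (dbfL2 (τ i) t1 t2 + (τ i).CL)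

/-- The improved-test bound `I(t1,t2)` of Theorem 2. -/
noncomputable def Itest {n : ℕ} (τ : Fin n → Task) (hc : Fin n → Bool) (t1 t2 : ℝ) : ℝ :=
  min t1 (dbfL1tot τ hc t1 t2 + dbfL2tot τ hc t1 t2 + dbfL3tot τ hc t1 t2) +
    (∑ i ∈ H2set τ hc t1 t2, dbfH (τ i) (t2 - t1) +
      ∑ i ∈ H3set τ hc t1 t2, dbfH (τ i) (t2 - t1)) +
    ∑ i ∈ H2set τ hc t1 t2, (CO (τ i) (t2 - t1) + (τ i).CH - (τ i).CL)


/-- Auxiliary: a `T`-separated finite set contained in `[u, v]` has at most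
`⌊(v-u)/T⌋ + 1` elements. -/
lemma sep_card_bound (T : ℝ) (hT : 0 < T) (S : Finset ℝ)
    (hsep : ∀ x ∈ S, ∀ y ∈ S, x ≠ y → T ≤ |x - y|)
    (u v : ℝ) (hmem : ∀ x ∈ S, u ≤ x ∧ x ≤ v) (hS : S.Nonempty) :
    (S.card : ℤ) ≤ ⌊(v - u) / T⌋ + 1 := by
  have huv : u ≤ v := by
    obtain ⟨x, hx⟩ := hS
    exact le_trans (hmem x hx).1 (hmem x hx).2
  have key : S.card ≤ (Finset.Icc (0 : ℤ) ⌊(v - u) / T⌋).card := by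
    apply Finset.card_le_card_of_injOn (fun x => ⌊(x - u) / T⌋)
    · intro x hx
      simp only [Finset.mem_coe, Finset.mem_Icc]
      constructor
      · exact Int.floor_nonneg.2 (div_nonneg (by linarith [(hmem x hx).1]) hT.le)
      · exact Int.floor_le_floor (by
          apply div_le_div_of_nonneg_right _ hT.le
          linarith [(hmem x hx).2])
    · intro x hx y hy hxy
      by_contra hne
      have hTle := hsep x hx y hy hne
      have step : ∀ a b : ℝ, a + T ≤ b → u ≤ a →
          ⌊(a - u) / T⌋ < ⌊(b - u) / T⌋ := by
        intro a b hab hua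
        have h1 : (a - u) / T + 1 ≤ (b - u) / T := by
          rw [div_add' _ _ _ hT.ne']
          apply div_le_div_of_nonneg_right _ hT.le
          linarith
        calc ⌊(a - u) / T⌋ < ⌊(a - u) / T⌋ + 1 := by omega
          _ = ⌊(a - u) / T + 1⌋ := (Int.floor_add_one _).symm
          _ ≤ ⌊(b - u) / T⌋ := Int.floor_le_floor h1
      rcases lt_or_gt_of_ne hne with h | h
      · have : x + T ≤ y := by
          rw [abs_sub_comm, abs_of_nonneg (by linarith)] at hTle; linarith
        exact absurd hxy (ne_of_lt (step x y this (hmem x hx).1))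
      · have : y + T ≤ x := by
          rw [abs_of_nonneg (by linarith)] at hTle; linarith
        exact absurd hxy.symm (ne_of_lt (step y x this (hmem y hy).1))
  have hfl : 0 ≤ ⌊(v - u) / T⌋ := Int.floor_nonneg.2 (div_nonneg (by linarith) hT.le)
  rw [Int.card_Icc] at key
  omega

/-- Lemma 4 of the paper. Demand bound for a HC task in case 2:
each job with real deadline at most `t2` is counted at `C^H` if its tightened deadline
exceeds `t1` and at `C^L` otherwise, and the total is at most
`dbf^L(t1,t2) + dbf^H(t2 - t1) + C^H`. -/
theorem hc_case2_demand_bound (τ : Task) (R : Finset ℝ) (hR : ReleaseSet τ R)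
    (t1 t2 : ℝ) (ht1 : 0 ≤ t1) (ht12 : t1 ≤ t2)
    (hcase2 : case2 τ t1 t2) :
    τ.CH * ((R.filter (fun x => x + τ.D ≤ t2 ∧ t1 < x + τ.DL)).card : ℝ) +
      τ.CL * ((R.filter (fun x => x + τ.D ≤ t2 ∧ x + τ.DL ≤ t1)).card : ℝ) ≤
      dbfL2 τ t1 t2 + dbfH τ (t2 - t1) + τ.CH := by
  obtain ⟨h1, h2, h3⟩ := hcase2
  obtain ⟨hRnn, hRsep⟩ := hR
  have hT := τ.hT
  set f : ℤ := ⌊(t2 - t1) / τ.T⌋ with hfdef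
  set m : ℤ := ⌊(t2 - τ.D) / τ.T⌋ with hmdef
  have hMOD : MOD (t2 - t1) τ.T = t2 - t1 - (f : ℝ) * τ.T := rfl
  rw [hMOD] at h1 h2
  have hf0 : 0 ≤ f := Int.floor_nonneg.2 (div_nonneg (by linarith) hT.le)
  have hDLpos : 0 < τ.DL := lt_of_lt_of_le τ.hCL τ.hCLDL
  -- ⌊(t2 - t1 - D)/T⌋ = f - 1
  have hk : ⌊(t2 - t1 - τ.D) / τ.T⌋ = f - 1 := by
    rw [Int.floor_eq_iff]
    constructor
    · rw [le_div_iff₀ hT]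
      push_cast
      have : τ.D ≤ τ.T := τ.hDT
      nlinarith [τ.hDLD]
    · rw [div_lt_iff₀ hT]
      push_cast
      nlinarith
  -- f ≤ m
  have hfm : f ≤ m := by
    apply Int.le_floor.2
    rw [le_div_iff₀ hT]
    linarith
  -- counting sets
  set A := R.filter (fun x => x + τ.D ≤ t2 ∧ t1 < x + τ.DL) with hA
  set B := R.filter (fun x => x + τ.D ≤ t2 ∧ x + τ.DL ≤ t1) with hB
  set C := R.filter (fun x => x + τ.D ≤ t2) with hC
  -- A.card + B.card = C.card
  have hAC : A = C.filter (fun x => t1 < x + τ.DL) := by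
    simp [hA, hC, Finset.filter_filter, and_comm]
  have hBC : B = C.filter (fun x => ¬ t1 < x + τ.DL) := by
    simp only [hB, hC, Finset.filter_filter, not_lt]
  have hcards : A.card + B.card = C.card := by
    rw [hAC, hBC]
    exact Finset.card_filter_add_card_filter_not _
  -- bound on A
  have haf : (A.card : ℤ) ≤ f + 1 := by
    rcases A.eq_empty_or_nonempty with h | h
    · simp [h]; omega
    · have hb := sep_card_bound τ.T hT A
        (fun x hx y hy => hRsep x (Finset.mem_filter.1 hx).1 y (Finset.mem_filter.1 hy).1)
        (t1 - τ.DL) (t2 - τ.D)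
        (fun x hx => by
          obtain ⟨_, hx1, hx2⟩ := Finset.mem_filter.1 hx
          exact ⟨by linarith, by linarith⟩) h
      have hfl : ⌊(t2 - τ.D - (t1 - τ.DL)) / τ.T⌋ = f := by
        rw [Int.floor_eq_iff]
        constructor
        · rw [le_div_iff₀ hT]; linarith
        · rw [div_lt_iff₀ hT]
          push_cast
          have hD : τ.D ≤ τ.T := τ.hDT
          nlinarith [τ.hDLD]
      rw [hfl] at hb
      linarith
  -- bound on C
  have hcm : (C.card : ℤ) ≤ m + 1 := by
    rcases C.eq_empty_or_nonempty with h | h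
    · simp [h]; omega
    · have hb := sep_card_bound τ.T hT C
        (fun x hx y hy => hRsep x (Finset.mem_filter.1 hx).1 y (Finset.mem_filter.1 hy).1)
        0 (t2 - τ.D)
        (fun x hx => by
          obtain ⟨hxR, hx1⟩ := Finset.mem_filter.1 hx
          exact ⟨by simpa using hRnn x hxR, by linarith⟩) h
      simp only [sub_zero] at hb
      rw [← hmdef] at hb
      exact hb
  -- evaluate dbfL2 and dbfH
  have hL2 : dbfL2 τ t1 t2 = ((m : ℝ) - f) * τ.CL := by
    unfold dbfL2
    rw [← hmdef, hk]
    congr 1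
    push_cast
    rw [max_eq_right]
    · ring
    · push_cast; have : (f : ℝ) ≤ (m : ℝ) := by exact_mod_cast hfm
      linarith
  have hH : dbfH τ (t2 - t1) = (f : ℝ) * τ.CH := by
    unfold dbfH
    rw [hk]
    push_cast
    rw [max_eq_right]
    · ring
    · have : (0 : ℝ) ≤ (f : ℝ) := by exact_mod_cast hf0
      nlinarith [τ.hCL, τ.hCLCH]
  rw [hL2, hH]
  -- final algebra
  have haf' : (A.card : ℝ) ≤ (f : ℝ) + 1 := by exact_mod_cast haf
  have hab' : (A.card : ℝ) + (B.card : ℝ) ≤ (m : ℝ) + 1 := by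
    have h' : ((A.card + B.card : ℕ) : ℤ) ≤ m + 1 := by
      rw [hcards]; exact hcm
    exact_mod_cast h'
  have hCL := τ.hCL
  have hCLCH := τ.hCLCH
  nlinarith [mul_le_mul_of_nonneg_left haf' (sub_nonneg.2 hCLCH),
    mul_le_mul_of_nonneg_left hab' hCL.le,
    Nat.cast_nonneg (α := ℝ) B.card, Nat.cast_nonneg (α := ℝ) A.card]

end MC
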